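/- Let d, n be positive integers with 2 ≤ n and d ≤ n, let H be a d-dimensional complex inner product space, and let φ_1, …, φ_n ∈ H all have the same norm √r for some r > 0. Then max_{i≠j} |⟨φ_i, φ_j⟩| / (‖φ_i‖·‖φ_j‖) ≥ √((n − d)/(d(n − 1))) (the Welch bound). -/

import Mathlib

open Finset Matrix

private lemma trace_sq_of_hermitian {m : Type*} [Fintype m]
    (M : Matrix m m ℂ) (h : Mᴴ = M) :
    (M * M).trace = ∑ i, ∑ j, (Complex.normSq (M i j) : ℂ) := by
  rw [Matrix.trace]
  refine Finset.sum_congr rfl fun i _ => ?_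
  rw [Matrix.diag_apply, Matrix.mul_apply]
  refine Finset.sum_congr rfl fun j _ => ?_
  have hji : M j i = (starRingEnd ℂ) (M i j) := by
    have h2 := congrFun (congrFun h j) i
    rw [Matrix.conjTranspose_apply] at h2
    exact h2.symm
  rw [hji, Complex.mul_conj]

/-- The Welch bound: `n` equal-norm vectors in a `d`-dimensional complex inner product
space have coherence at least `√((n − d)/(d(n − 1)))`. -/
theorem welch_bound (d n : ℕ) (hd : 0 < d) (hn : 2 ≤ n) (hdn : d ≤ n)
    (H : Type*) [NormedAddCommGroup H] [InnerProductSpace ℂ H] [FiniteDimensional ℂ H]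
    (hdim : Module.finrank ℂ H = d)
    (r : ℝ) (hr : 0 < r) (φ : Fin n → H) (hnorm : ∀ i, ‖φ i‖ = Real.sqrt r) :
    ∃ i j : Fin n, i ≠ j ∧
      Real.sqrt (((n : ℝ) - d) / (d * ((n : ℝ) - 1))) ≤
        ‖(inner ℂ (φ i) (φ j) : ℂ)‖ / (‖φ i‖ * ‖φ j‖) := by
  have b : OrthonormalBasis (Fin d) ℂ H :=
    (stdOrthonormalBasis ℂ H).reindex (finCongr hdim)
  set x : Fin n → EuclideanSpace ℂ (Fin d) := fun i => b.repr (φ i) with hx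
  have hxi : ∀ i j, (inner ℂ (x i) (x j) : ℂ) = inner ℂ (φ i) (φ j) := fun i j =>
    b.repr.inner_map_map (φ i) (φ j)
  have hxn : ∀ i, ‖x i‖ = Real.sqrt r := fun i => by
    rw [hx]; simpa using hnorm i
  set A : Matrix (Fin d) (Fin n) ℂ := Matrix.of fun k i => x i k with hA
  set G : Matrix (Fin n) (Fin n) ℂ := Aᴴ * A with hG
  set B : Matrix (Fin d) (Fin d) ℂ := A * Aᴴ with hB
  have hGij : ∀ i j, G i j = (inner ℂ (x i) (x j) : ℂ) := by
    intro i j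
    rw [hG, Matrix.mul_apply, PiLp.inner_apply]
    refine Finset.sum_congr rfl fun k _ => ?_
    rw [Matrix.conjTranspose_apply, RCLike.inner_apply, hA]
    exact mul_comm _ _
  have hGH : Gᴴ = G := by
    rw [hG, Matrix.conjTranspose_mul, Matrix.conjTranspose_conjTranspose]
  have hBH : Bᴴ = B := by
    rw [hB, Matrix.conjTranspose_mul, Matrix.conjTranspose_conjTranspose]
  have hGii : ∀ i, G i i = (r : ℂ) := by
    intro i
    rw [hGij, inner_self_eq_norm_sq_to_K, hxn]
    rw [← RCLike.ofReal_pow, Real.sq_sqrt hr.le]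
    norm_cast
  have htr : G.trace = ((n : ℝ) * r : ℝ) := by
    rw [Matrix.trace]
    simp only [Matrix.diag_apply, hGii]
    push_cast
    rw [Finset.sum_const, Finset.card_univ, Fintype.card_fin, nsmul_eq_mul]
  have htrB : B.trace = ((n : ℝ) * r : ℝ) := by
    rw [hB, Matrix.trace_mul_comm, ← hG, htr]
  have htrsq : (G * G).trace = (B * B).trace := by
    rw [hG, hB, Matrix.mul_assoc, Matrix.trace_mul_comm]
    simp only [Matrix.mul_assoc]
  have key : ∑ i, ∑ j, Complex.normSq (G i j) = ∑ k, ∑ l, Complex.normSq (B k l) := by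
    have h1 := trace_sq_of_hermitian G hGH
    have h2 := trace_sq_of_hermitian B hBH
    rw [htrsq, h2] at h1
    exact_mod_cast h1.symm
  -- Cauchy-Schwarz on the diagonal of B
  have hβ : ∑ k, (B k k).re = (n : ℝ) * r := by
    have := congrArg Complex.re htrB
    rw [Matrix.trace] at this
    simpa [Complex.re_sum] using this
  have hCS : ((n : ℝ) * r) ^ 2 ≤ (d : ℝ) * ∑ k, ((B k k).re) ^ 2 := by
    have h := sq_sum_le_card_mul_sum_sq (s := (univ : Finset (Fin d)))
      (f := fun k => (B k k).re)
    rw [hβ] at h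
    simpa using h
  have hre2 : ∀ k, ((B k k).re) ^ 2 ≤ Complex.normSq (B k k) := by
    intro k
    rw [Complex.normSq_apply]
    nlinarith [sq_nonneg (B k k).im]
  have hkk : ∑ k, Complex.normSq (B k k) ≤ ∑ k, ∑ l, Complex.normSq (B k l) :=
    Finset.sum_le_sum fun k _ =>
      Finset.single_le_sum (fun l _ => Complex.normSq_nonneg _) (Finset.mem_univ k)
  have hmain : ((n : ℝ) * r) ^ 2 ≤ (d : ℝ) * ∑ i, ∑ j, Complex.normSq (G i j) := by
    rw [key]
    calc ((n : ℝ) * r) ^ 2 ≤ (d : ℝ) * ∑ k, ((B k k).re) ^ 2 := hCS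
      _ ≤ (d : ℝ) * ∑ k, Complex.normSq (B k k) := by
          apply mul_le_mul_of_nonneg_left (Finset.sum_le_sum fun k _ => hre2 k)
          positivity
      _ ≤ (d : ℝ) * ∑ k, ∑ l, Complex.normSq (B k l) := by
          apply mul_le_mul_of_nonneg_left hkk; positivity
  -- split into diagonal and off-diagonal
  set f : Fin n × Fin n → ℝ := fun p => Complex.normSq (G p.1 p.2) with hf
  have hsplit : ∑ i, ∑ j, Complex.normSq (G i j)
      = (n : ℝ) * r ^ 2 + ∑ p ∈ (univ : Finset (Fin n)).offDiag, f p := by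
    rw [← Finset.sum_product' (f := fun i j => Complex.normSq (G i j)),
      ← Finset.diag_union_offDiag (univ : Finset (Fin n)),
      Finset.sum_union (Finset.disjoint_diag_offDiag _), Finset.sum_diag]
    congr 1
    · simp only [hGii]
      rw [Finset.sum_const, Finset.card_univ, Fintype.card_fin, nsmul_eq_mul]
      rw [Complex.normSq_ofReal]
      ring
  have hdR : (0 : ℝ) < d := by exact_mod_cast hd
  have hn1R : (0 : ℝ) < (n : ℝ) - 1 := by
    have : (2 : ℝ) ≤ n := by exact_mod_cast hn
    linarith
  have hnR : (0 : ℝ) < n := by positivity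
  set Q : ℝ := ((n : ℝ) - d) / (d * ((n : ℝ) - 1)) with hQ
  have hcard : ((univ : Finset (Fin n)).offDiag.card : ℝ) = (n : ℝ) * n - n := by
    rw [Finset.offDiag_card, Finset.card_univ, Fintype.card_fin]
    have h1 : n ≤ n * n := Nat.le_mul_of_pos_left n (by omega)
    push_cast [Nat.cast_sub h1]
    ring
  have havg : ∑ p ∈ (univ : Finset (Fin n)).offDiag, (r ^ 2 * Q)
      ≤ ∑ p ∈ (univ : Finset (Fin n)).offDiag, f p := by
    rw [Finset.sum_const, nsmul_eq_mul, hcard]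
    have hoff : ((n : ℝ) * r) ^ 2 ≤ (d : ℝ) * ((n : ℝ) * r ^ 2
        + ∑ p ∈ (univ : Finset (Fin n)).offDiag, f p) := by
      rw [← hsplit]; exact hmain
    rw [hQ]
    rw [div_eq_mul_inv, show ((n:ℝ) * n - n) * (r ^ 2 * (((n:ℝ) - d) * ((d:ℝ) * ((n:ℝ) - 1))⁻¹))
      = ((n:ℝ) * ((n:ℝ) - 1) * (r ^ 2 * ((n:ℝ) - d))) * ((d:ℝ) * ((n:ℝ) - 1))⁻¹ by ring,
      ← div_eq_mul_inv, div_le_iff₀ (by positivity)]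
    nlinarith [hoff]
  have hne : ((univ : Finset (Fin n)).offDiag).Nonempty := by
    refine ⟨(⟨0, by omega⟩, ⟨1, by omega⟩), ?_⟩
    rw [Finset.mem_offDiag]
    refine ⟨Finset.mem_univ _, Finset.mem_univ _, ?_⟩
    intro h
    have := congrArg Fin.val h
    simp at this
  obtain ⟨p, hp, hple⟩ := Finset.exists_le_of_sum_le hne havg
  rw [Finset.mem_offDiag] at hp
  refine ⟨p.1, p.2, hp.2.2, ?_⟩
  have hnormprod : ‖φ p.1‖ * ‖φ p.2‖ = r := by
    rw [hnorm, hnorm, Real.mul_self_sqrt hr.le]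
  have hQ0 : 0 ≤ Q := by
    rw [hQ]
    apply div_nonneg
    · have : (d : ℝ) ≤ n := by exact_mod_cast hdn
      linarith
    · positivity
  have hinner2 : r ^ 2 * Q ≤ ‖(inner ℂ (φ p.1) (φ p.2) : ℂ)‖ ^ 2 := by
    have : f p = ‖(inner ℂ (φ p.1) (φ p.2) : ℂ)‖ ^ 2 := by
      rw [hf]
      simp only [hGij, hxi]
      rw [Complex.normSq_eq_norm_sq]
    rw [← this]
    exact hple
  rw [hnormprod, le_div_iff₀ hr]
  calc Real.sqrt Q * r = Real.sqrt (r ^ 2 * Q) := by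
        rw [Real.sqrt_mul (sq_nonneg r), Real.sqrt_sq hr.le]; ring
    _ ≤ Real.sqrt (‖(inner ℂ (φ p.1) (φ p.2) : ℂ)‖ ^ 2) := Real.sqrt_le_sqrt hinner2
    _ = ‖(inner ℂ (φ p.1) (φ p.2) : ℂ)‖ := Real.sqrt_sq (norm_nonneg _)
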